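/- Let E be a directed graph with isolated cycles. Then every closed simple path in E is a cycle, i.e., has pairwise distinct source vertices s(μ_i). -/

import Mathlib

/-- A directed graph `E = (E⁰, E¹, s, r)`. -/
structure DGraph where
  V : Type
  E : Type
  s : E → V
  r : E → V

namespace DGraph

variable (G : DGraph)

/-- A list of edges forms a path if consecutive edges are composable. -/
def IsPath (p : List G.E) : Prop := p.Chain' (fun e f => G.r e = G.s f)

/-- A closed simple path based at `v`: a nonempty path starting and ending at `v` such that
no intermediate edge has source `v`. -/
def IsClosedSimplePath (v : G.V) (p : List G.E) : Prop :=
  p ≠ [] ∧ G.IsPath p ∧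
    (∀ h : p ≠ [], G.s (p.head h) = v ∧ G.r (p.getLast h) = v) ∧
    ∀ i : Fin p.length, 0 < (i : ℕ) → G.s (p.get i) ≠ v

/-- A cycle: a nonempty closed path all of whose edges have pairwise distinct sources. -/
def IsCycle (p : List G.E) : Prop :=
  p ≠ [] ∧ G.IsPath p ∧
    (∀ h : p ≠ [], G.r (p.getLast h) = G.s (p.head h)) ∧ (p.map G.s).Nodup

/-- The graph `G` has isolated cycles: whenever two closed simple paths share the source of
some of their edges, the corresponding edges coincide. -/
def IsolatedCycles : Prop :=
  ∀ v w (p q : List G.E), G.IsClosedSimplePath v p → G.IsClosedSimplePath w q →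
    ∀ (i : Fin p.length) (j : Fin q.length),
      G.s (p.get i) = G.s (q.get j) → p.get i = q.get j

/-- `v ≥ w` : there is a (possibly empty) finite directed path from `v` to `w`. -/
def Reaches : G.V → G.V → Prop :=
  Relation.ReflTransGen (fun a b => ∃ e : G.E, G.s e = a ∧ G.r e = b)

/-- The relation `C ≥ C'` on cycles: some vertex of `C` reaches some vertex of `C'`. -/
def CycleGE (p q : List G.E) : Prop :=
  ∃ v w : G.V, v ∈ p.map G.s ∧ w ∈ q.map G.s ∧ G.Reaches v w

end DGraph

open DGraph

/-- In a graph with isolated cycles, every closed simple path is a cycle: its edges have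
pairwise distinct sources. -/
theorem closedSimplePath_isCycle_of_isolatedCycles
    (G : DGraph) (hiso : G.IsolatedCycles) (v : G.V) (p : List G.E)
    (hp : G.IsClosedSimplePath v p) : (p.map G.s).Nodup := by
  obtain ⟨hne, hpath, hends, hmid⟩ := hp
  have key : ∀ k (i j : Fin p.length), (i : ℕ) < j → p.length - (j : ℕ) = k →
      G.s (p.get i) ≠ G.s (p.get j) := by
    intro k
    induction k using Nat.strong_induction_on with
    | _ k ih =>
      intro i j hij hk hs
      have hedge : p.get i = p.get j :=
        hiso v v p p ⟨hne, hpath, hends, hmid⟩ ⟨hne, hpath, hends, hmid⟩ i j hs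
      have hi1 : (i : ℕ) + 1 < p.length := by omega
      have hc1 : G.r (p.get i) = G.s (p.get ⟨(i : ℕ) + 1, hi1⟩) := List.isChain_iff_getElem.mp hpath i (by omega)
      by_cases hj : (j : ℕ) = p.length - 1
      · have hlast : G.r (p.getLast hne) = v := (hends hne).2
        have hget : p.getLast hne = p.get j := by
          rw [List.getLast_eq_getElem, List.get_eq_getElem]
          simp [hj]
        have hrj : G.r (p.get j) = v := hget ▸ hlast
        have hv : G.s (p.get ⟨(i : ℕ) + 1, hi1⟩) = v := by
          rw [← hc1, hedge]; exact hrj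
        exact hmid ⟨(i : ℕ) + 1, hi1⟩ (by simp) hv
      · have hjlt : (j : ℕ) < p.length := j.2
        have hj1 : (j : ℕ) + 1 < p.length := by omega
        have hc2 : G.r (p.get j) = G.s (p.get ⟨(j : ℕ) + 1, hj1⟩) := List.isChain_iff_getElem.mp hpath j (by omega)
        refine ih (p.length - ((j : ℕ) + 1)) (by omega) ⟨(i : ℕ) + 1, hi1⟩
          ⟨(j : ℕ) + 1, hj1⟩ (by simpa using hij) rfl ?_
        rw [← hc1, ← hc2, hedge]
  rw [List.Nodup, List.pairwise_iff_get]
  intro a b hab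
  simp only [List.get_eq_getElem, List.getElem_map]
  exact key _ _ _ (by simpa using hab) rfl
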